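/- Let A be an n×n generalized tournament matrix and α > 1/2. If for every clan I of A with |I| ≥ 2 the principal submatrix A[I] is α-separable, then A is α-linear. -/
import Mathlib


def IsGTM {n : ℕ} (M : Matrix (Fin n) (Fin n) ℝ) : Prop :=
  (∀ i j, 0 ≤ M i j) ∧ M + M.transpose = (Matrix.of fun _ _ => (1 : ℝ)) - 1

def IsClan {m : Type*} (M : Matrix m m ℝ) (X : Set m) : Prop :=
  ∀ i ∈ X, ∀ j ∈ X, ∀ k ∉ X, M i k = M j k ∧ M k i = M k j

/-- `M` is `α`-separable: a bipartition `X, Y` with `M x y = α` for `x ∈ X`, `y ∈ Y`. -/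
def AlphaSeparable {m : Type*} (M : Matrix m m ℝ) (α : ℝ) : Prop :=
  ∃ X Y : Set m, X.Nonempty ∧ Y.Nonempty ∧ Disjoint X Y ∧ X ∪ Y = Set.univ ∧
    ∀ x ∈ X, ∀ y ∈ Y, M x y = α

/-- `M` is `α`-linear: an ordering of the indices with `M x_i x_j = α` for `i < j`. -/
def AlphaLinear {n : ℕ} (M : Matrix (Fin n) (Fin n) ℝ) (α : ℝ) : Prop :=
  ∃ σ : Equiv.Perm (Fin n), ∀ i j : Fin n, i < j → M (σ i) (σ j) = α

lemma alphaSep_congr {m1 m2 : Type*} (e : m1 ≃ m2) (M1 : Matrix m1 m1 ℝ) (M2 : Matrix m2 m2 ℝ)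
    (hM : ∀ a b, M1 a b = M2 (e a) (e b)) {α : ℝ} (h : AlphaSeparable M2 α) :
    AlphaSeparable M1 α := by
  obtain ⟨X, Y, hX, hY, hd, hu, hs⟩ := h
  refine ⟨e ⁻¹' X, e ⁻¹' Y, ?_, ?_, hd.preimage e, ?_, ?_⟩
  · obtain ⟨x, hx⟩ := hX; exact ⟨e.symm x, by simp [Set.mem_preimage, hx]⟩
  · obtain ⟨y, hy⟩ := hY; exact ⟨e.symm y, by simp [Set.mem_preimage, hy]⟩
  · rw [← Set.preimage_union, hu, Set.preimage_univ]
  · intro a ha b hb; rw [hM]; exact hs _ ha _ hb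

/-- Clan hypothesis restricts to a suitable subset. -/
lemma restrictClan {m : Type*} (α : ℝ) (M : Matrix m m ℝ) (S : Set m)
    (hconst : ∀ t ∉ S, ∀ s ∈ S, ∀ s' ∈ S, M s t = M s' t ∧ M t s = M t s')
    (h : ∀ I : Set m, IsClan M I → 2 ≤ I.ncard →
      AlphaSeparable (M.submatrix (Subtype.val : ↥I → m) Subtype.val) α) :
    ∀ I : Set ↥S, IsClan (M.submatrix (Subtype.val : ↥S → m) Subtype.val) I → 2 ≤ I.ncard →
      AlphaSeparable ((M.submatrix (Subtype.val : ↥S → m) Subtype.val).submatrix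
        (Subtype.val : ↥I → ↥S) Subtype.val) α := by
  intro I hI hI2
  set J : Set m := Subtype.val '' I with hJ
  have hclan : IsClan M J := by
    rintro i ⟨i', hi', rfl⟩ j ⟨j', hj', rfl⟩ k hk
    by_cases hkS : k ∈ S
    · have hk' : (⟨k, hkS⟩ : ↥S) ∉ I := fun hmem => hk ⟨⟨k, hkS⟩, hmem, rfl⟩
      exact hI i' hi' j' hj' ⟨k, hkS⟩ hk'
    · have h1 := hconst k hkS i'.val i'.2 j'.val j'.2
      exact ⟨h1.1, h1.2⟩
  have hcard : 2 ≤ J.ncard := by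
    rw [hJ, Set.ncard_image_of_injective I Subtype.val_injective]; exact hI2
  have hsepJ := h J hclan hcard
  refine alphaSep_congr (Equiv.Set.image Subtype.val I Subtype.val_injective) _ _
    (fun a b => ?_) hsepJ
  simp only [Matrix.submatrix_apply, Equiv.Set.image_apply]

lemma aux_lin (α : ℝ) : ∀ (N : ℕ) (m : Type) [Fintype m] (M : Matrix m m ℝ),
    Fintype.card m ≤ N →
    (∀ i j : m, i ≠ j → M i j + M j i = 1) →
    (∀ I : Set m, IsClan M I → 2 ≤ I.ncard →
      AlphaSeparable (M.submatrix (Subtype.val : ↥I → m) Subtype.val) α) →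
    ∃ f : m → ℕ, Function.Injective f ∧ (∀ x, f x < Fintype.card m) ∧
      ∀ i j : m, f i < f j → M i j = α := by
  intro N
  induction N with
  | zero =>
    intro m _ M hcard _ _
    have : IsEmpty m := Fintype.card_eq_zero_iff.mp (Nat.le_zero.mp hcard)
    exact ⟨fun _ => 0, fun a => isEmptyElim a, fun a => isEmptyElim a, fun a => isEmptyElim a⟩
  | succ N ih =>
    intro m _ M hcard hskew h
    classical
    by_cases hc : Fintype.card m ≤ 1
    · have hsub : Subsingleton m := Fintype.card_le_one_iff_subsingleton.mp hc
      refine ⟨fun _ => 0, fun a b _ => Subsingleton.elim a b,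
        fun x => Fintype.card_pos_iff.mpr ⟨x⟩, fun i j hij => absurd hij (lt_irrefl 0)⟩
    push_neg at hc
    -- univ is a clan
    have hclanU : IsClan M Set.univ := fun i _ j _ k hk => absurd (Set.mem_univ k) hk
    have hcardU : 2 ≤ (Set.univ : Set m).ncard := by
      rw [Set.ncard_univ, Nat.card_eq_fintype_card]; omega
    obtain ⟨X, Y, hXne, hYne, hdXY, huXY, hsep⟩ := h Set.univ hclanU hcardU
    set X' : Set m := Subtype.val '' X with hX'def
    set Y' : Set m := Subtype.val '' Y with hY'def
    have hcover : ∀ x : m, x ∈ X' ∨ x ∈ Y' := by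
      intro x
      have hx : (⟨x, Set.mem_univ x⟩ : ↥(Set.univ : Set m)) ∈ X ∪ Y := by
        rw [huXY]; trivial
      rcases hx with hx | hx
      · exact Or.inl ⟨_, hx, rfl⟩
      · exact Or.inr ⟨_, hx, rfl⟩
    have hdisj : Disjoint X' Y' := by
      rw [Set.disjoint_iff_forall_ne]
      rintro a ⟨a', ha', rfl⟩ b ⟨b', hb', rfl⟩ hab
      exact hdXY.ne_of_mem ha' hb' (Subtype.ext hab)
    have hsep' : ∀ x ∈ X', ∀ y ∈ Y', M x y = α := by
      rintro x ⟨x', hx', rfl⟩ y ⟨y', hy', rfl⟩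
      exact hsep x' hx' y' hy'
    have hX'ne : X'.Nonempty := hXne.image _
    have hY'ne : Y'.Nonempty := hYne.image _
    -- cardinalities
    have hcards : Fintype.card ↥X' + Fintype.card ↥Y' = Fintype.card m := by
      have hu : X' ∪ Y' = Set.univ := Set.eq_univ_iff_forall.mpr
        (fun x => (Set.mem_union _ _ _).mpr (hcover x))
      have h1 : (X' ∪ Y').ncard = X'.ncard + Y'.ncard :=
        Set.ncard_union_eq hdisj (Set.toFinite _) (Set.toFinite _)
      rw [hu, Set.ncard_univ, Nat.card_eq_fintype_card] at h1
      rw [← Nat.card_coe_set_eq, ← Nat.card_coe_set_eq,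
        Nat.card_eq_fintype_card, Nat.card_eq_fintype_card] at h1
      omega
    have hXpos : 1 ≤ Fintype.card ↥X' := Fintype.card_pos_iff.mpr
      (Set.nonempty_coe_sort.mpr hX'ne)
    have hYpos : 1 ≤ Fintype.card ↥Y' := Fintype.card_pos_iff.mpr
      (Set.nonempty_coe_sort.mpr hY'ne)
    -- apply IH to X'
    have hskewX : ∀ i j : ↥X', i ≠ j →
        (M.submatrix (Subtype.val : ↥X' → m) Subtype.val) i j
        + (M.submatrix (Subtype.val : ↥X' → m) Subtype.val) j i = 1 :=
      fun i j hij => hskew i.val j.val (Subtype.val_injective.ne_iff.mpr hij)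
    have hconstX : ∀ t ∉ X', ∀ s ∈ X', ∀ s' ∈ X', M s t = M s' t ∧ M t s = M t s' := by
      intro t ht s hs s' hs'
      have htY : t ∈ Y' := (hcover t).resolve_left ht
      have h1 : M s t = α := hsep' s hs t htY
      have h2 : M s' t = α := hsep' s' hs' t htY
      have h3 := hskew s t (hdisj.ne_of_mem hs htY)
      have h4 := hskew s' t (hdisj.ne_of_mem hs' htY)
      constructor
      · rw [h1, h2]
      · linarith
    have hconstY : ∀ t ∉ Y', ∀ s ∈ Y', ∀ s' ∈ Y', M s t = M s' t ∧ M t s = M t s' := by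
      intro t ht s hs s' hs'
      have htX : t ∈ X' := (hcover t).resolve_right ht
      have h1 : M t s = α := hsep' t htX s hs
      have h2 : M t s' = α := hsep' t htX s' hs'
      have h3 := hskew s t (hdisj.ne_of_mem htX hs).symm
      have h4 := hskew s' t (hdisj.ne_of_mem htX hs').symm
      constructor
      · linarith
      · rw [h1, h2]
    have hskewY : ∀ i j : ↥Y', i ≠ j →
        (M.submatrix (Subtype.val : ↥Y' → m) Subtype.val) i j
        + (M.submatrix (Subtype.val : ↥Y' → m) Subtype.val) j i = 1 :=
      fun i j hij => hskew i.val j.val (Subtype.val_injective.ne_iff.mpr hij)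
    have hcardX : Fintype.card ↥X' ≤ N := by omega
    have hcardY : Fintype.card ↥Y' ≤ N := by omega
    obtain ⟨fX, hfXinj, hfXlt, hfXα⟩ := ih ↥X' (M.submatrix Subtype.val Subtype.val) hcardX
      hskewX (restrictClan α M X' hconstX h)
    obtain ⟨fY, hfYinj, hfYlt, hfYα⟩ := ih ↥Y' (M.submatrix Subtype.val Subtype.val) hcardY
      hskewY (restrictClan α M Y' hconstY h)
    set cX := Fintype.card ↥X' with hcX
    refine ⟨fun x => if hx : x ∈ X' then fX ⟨x, hx⟩ else
      cX + fY ⟨x, (hcover x).resolve_left hx⟩, ?_, ?_, ?_⟩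
    · intro a b hab
      by_cases ha : a ∈ X' <;> by_cases hb : b ∈ X' <;> simp only [ha, hb, dif_pos,
        dif_neg, not_false_iff] at hab
      · exact congrArg Subtype.val (hfXinj hab)
      · exact absurd hab (by have := hfXlt ⟨a, ha⟩; omega)
      · exact absurd hab (by have := hfXlt ⟨b, hb⟩; omega)
      · have : fY ⟨a, (hcover a).resolve_left ha⟩ = fY ⟨b, (hcover b).resolve_left hb⟩ := by omega
        exact congrArg Subtype.val (hfYinj this)
    · intro x
      by_cases hx : x ∈ X' <;> simp only [hx, dif_pos, dif_neg, not_false_iff]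
      · have := hfXlt ⟨x, hx⟩; omega
      · have := hfYlt ⟨x, (hcover x).resolve_left hx⟩; omega
    · intro i j hij
      by_cases hi : i ∈ X' <;> by_cases hj : j ∈ X' <;> simp only [hi, hj, dif_pos,
        dif_neg, not_false_iff] at hij
      · exact hfXα ⟨i, hi⟩ ⟨j, hj⟩ hij
      · exact hsep' i hi j ((hcover j).resolve_left hj)
      · exact absurd hij (by have := hfXlt ⟨j, hj⟩; omega)
      · exact hfYα ⟨i, (hcover i).resolve_left hi⟩ ⟨j, (hcover j).resolve_left hj⟩ (by omega)

theorem stmt16 {n : ℕ} (A : Matrix (Fin n) (Fin n) ℝ) (hA : IsGTM A)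
    (α : ℝ) (hα : 1 / 2 < α)
    (h : ∀ I : Set (Fin n), IsClan A I → 2 ≤ I.ncard →
      AlphaSeparable (A.submatrix (Subtype.val : ↥I → Fin n) (Subtype.val : ↥I → Fin n)) α) :
    AlphaLinear A α := by
  classical
  have hskew : ∀ i j : Fin n, i ≠ j → A i j + A j i = 1 := by
    intro i j hij
    have := congrFun (congrFun hA.2 i) j
    simp only [Matrix.add_apply, Matrix.transpose_apply, Matrix.sub_apply, Matrix.of_apply,
      Matrix.one_apply_ne hij] at this
    linarith
  obtain ⟨f, hinj, hlt, hfα⟩ := aux_lin α n (Fin n) A (by simp) hskew h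
  have hlt' : ∀ x, f x < n := by simpa using hlt
  set g : Fin n → Fin n := fun x => ⟨f x, hlt' x⟩ with hg
  have hginj : Function.Injective g := fun a b hab => hinj (congrArg Fin.val hab)
  have hgbij : Function.Bijective g := Finite.injective_iff_bijective.mp hginj
  refine ⟨(Equiv.ofBijective g hgbij).symm, fun i j hij => ?_⟩
  apply hfα
  have h1 : g ((Equiv.ofBijective g hgbij).symm i) = i :=
    (Equiv.ofBijective g hgbij).apply_symm_apply i
  have h2 : g ((Equiv.ofBijective g hgbij).symm j) = j :=
    (Equiv.ofBijective g hgbij).apply_symm_apply j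
  have e1 : f ((Equiv.ofBijective g hgbij).symm i) = i.val := congrArg Fin.val h1
  have e2 : f ((Equiv.ofBijective g hgbij).symm j) = j.val := congrArg Fin.val h2
  rw [e1, e2]
  exact hij
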